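/- arXiv:1701.08424 — 4 statements merged into one kernel-verified Lean document; each statement's English description precedes it below -/
import Mathlib

section
/- Let E : ℂ → ℂ be defined by E(z) = φ(N,z) + i·φ'(N,z), where φ solves -φ''+qφ=zφ with φ(0,z)=0, φ'(0,z)=1, q real continuous on [0,N]. Then for every z with Im z ≠ 0, (|E(z)|² - |E(conj z)|²)/(4·Im z) = ∫₀ᴺ |φ(x,z)|² dx. In particular, for Im z > 0 one has |E(z)| > |E(conj z)|, i.e., E is a Hermite–Biehler function. -/
open Complex ComplexConjugate

lemma wronskian_int (N : ℝ) (hN : 0 < N) (q : ℝ → ℝ) (z : ℂ) (f g : ℝ → ℂ)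
    (hd : ∀ x ∈ Set.Icc (0:ℝ) N, HasDerivAt f (g x) x)
    (hd' : ∀ x ∈ Set.Icc (0:ℝ) N, HasDerivAt g ((q x : ℂ) * f x - z * f x) x)
    (h0 : f 0 = 0) (h1 : g 0 = 1) :
    conj (f N) * g N - conj (g N) * f N
      = (conj z - z) * (((∫ x in (0:ℝ)..N, ‖f x‖ ^ 2 : ℝ)) : ℂ) := by
  have hIcc : Set.uIcc (0:ℝ) N = Set.Icc 0 N := Set.uIcc_of_le hN.le
  have hfc : ContinuousOn f (Set.Icc 0 N) :=
    fun x hx => (hd x hx).continuousAt.continuousWithinAt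
  have key : ∀ w : ℂ, ((‖w‖^2 : ℝ) : ℂ) = conj w * w := by
    intro w
    rw [Complex.sq_norm]; exact Complex.normSq_eq_conj_mul_self
  have hW : ∀ x ∈ Set.uIcc (0:ℝ) N,
      HasDerivAt (fun y => conj (f y) * g y - conj (g y) * f y)
        ((conj z - z) * ((‖f x‖^2 : ℝ) : ℂ)) x := by
    intro x hx
    rw [hIcc] at hx
    have H := (((hd x hx).star.mul (hd' x hx)).sub ((hd' x hx).star.mul (hd x hx)))
    refine H.congr_deriv ?_
    · rw [key]
      simp only [Complex.star_def, map_sub, map_mul, Complex.conj_ofReal]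
      ring
  have hint : IntervalIntegrable (fun x => (conj z - z) * ((‖f x‖^2 : ℝ) : ℂ)) MeasureTheory.volume 0 N := by
    apply ContinuousOn.intervalIntegrable
    rw [hIcc]
    exact continuousOn_const.mul (Complex.continuous_ofReal.comp_continuousOn ((hfc.norm).pow 2))
  have := intervalIntegral.integral_eq_sub_of_hasDerivAt hW hint
  rw [intervalIntegral.integral_const_mul, intervalIntegral.integral_ofReal] at this
  rw [this, h0, h1]
  simp


lemma conj_symm (N : ℝ) (hN : 0 < N) (q : ℝ → ℝ) (hq : ContinuousOn q (Set.Icc 0 N))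
    (φ φ' : ℝ → ℂ → ℂ)
    (hderiv : ∀ z : ℂ, ∀ x ∈ Set.Icc (0:ℝ) N, HasDerivAt (fun y => φ y z) (φ' x z) x)
    (hderiv' : ∀ z : ℂ, ∀ x ∈ Set.Icc (0:ℝ) N,
      HasDerivAt (fun y => φ' y z) ((q x : ℂ) * φ x z - z * φ x z) x)
    (h0 : ∀ z : ℂ, φ 0 z = 0) (h1 : ∀ z : ℂ, φ' 0 z = 1) (z : ℂ) :
    φ N (conj z) = conj (φ N z) ∧ φ' N (conj z) = conj (φ' N z) := by
  obtain ⟨C, hC⟩ := (isCompact_Icc).exists_bound_of_continuousOn hq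
  have hC0 : 0 ≤ C := le_trans (norm_nonneg _) (hC 0 ⟨le_rfl, hN.le⟩)
  set p : ℝ → ℝ := fun t => min N (max 0 t) with hp
  have hpmem : ∀ t, p t ∈ Set.Icc 0 N :=
    fun t => ⟨le_min hN.le (le_max_left 0 t), min_le_left _ _⟩
  set c : ℝ → ℂ := fun t => (q (p t) : ℂ) - conj z with hc
  have hcb : ∀ t, ‖c t‖ ≤ C + ‖z‖ := by
    intro t
    calc ‖c t‖ ≤ ‖(q (p t) : ℂ)‖ + ‖conj z‖ := norm_sub_le _ _
      _ ≤ C + ‖z‖ := by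
          rw [Complex.norm_real, RCLike.norm_conj]
          exact add_le_add (hC _ (hpmem t)) le_rfl
  set K : NNReal := ⟨max 1 (C + ‖z‖), le_trans zero_le_one (le_max_left _ _)⟩ with hK
  have hK1 : (1:ℝ) ≤ (K:ℝ) := le_max_left _ _
  have hKc : ∀ t, ‖c t‖ ≤ (K:ℝ) := fun t => le_trans (hcb t) (le_max_right _ _)
  set v : ℝ → ℂ × ℂ → ℂ × ℂ := fun t u => (u.2, c t * u.1) with hv_def
  have hv : ∀ t, LipschitzWith K (v t) := by
    intro t
    apply LipschitzWith.of_dist_le_mul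
    intro u w
    rw [Prod.dist_eq]
    apply max_le
    · calc dist u.2 w.2 ≤ dist u w := le_max_right _ _
        _ = 1 * dist u w := (one_mul _).symm
        _ ≤ (K:ℝ) * dist u w := mul_le_mul_of_nonneg_right hK1 dist_nonneg
    · rw [dist_eq_norm, ← mul_sub, norm_mul]
      have h₁ : ‖u.1 - w.1‖ ≤ dist u w := by
        rw [dist_eq_norm] at *
        exact le_max_left _ _
      exact mul_le_mul (hKc t) h₁ (norm_nonneg _) (le_trans zero_le_one hK1)
  obtain ⟨f, hf_def⟩ : ∃ f : ℝ → ℂ × ℂ, f = fun t => (φ t (conj z), φ' t (conj z)) := ⟨_, rfl⟩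
  obtain ⟨g, hg_def⟩ : ∃ g : ℝ → ℂ × ℂ, g = fun t => (conj (φ t z), conj (φ' t z)) := ⟨_, rfl⟩
  have hpt : ∀ t ∈ Set.Ico (0:ℝ) N, p t = t := by
    intro t ht
    simp only [hp]
    rw [max_eq_right ht.1, min_eq_right (le_of_lt ht.2)]
  have hfc : ContinuousOn f (Set.Icc 0 N) := by
    rw [hf_def]
    intro x hx
    exact ((hderiv (conj z) x hx).continuousAt.continuousWithinAt.prodMk
      (hderiv' (conj z) x hx).continuousAt.continuousWithinAt)
  have hgc : ContinuousOn g (Set.Icc 0 N) := by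
    rw [hg_def]
    intro x hx
    exact (((hderiv z x hx).star.continuousAt.continuousWithinAt).prodMk
      ((hderiv' z x hx).star.continuousAt.continuousWithinAt))
  have hf' : ∀ t ∈ Set.Ico (0:ℝ) N, HasDerivWithinAt f (v t (f t)) (Set.Ici t) t := by
    intro t ht
    have h1' := hderiv (conj z) t (Set.Ico_subset_Icc_self ht)
    have h2' := hderiv' (conj z) t (Set.Ico_subset_Icc_self ht)
    have hvv : v t (f t) = (φ' t (conj z), (q t : ℂ) * φ t (conj z) - conj z * φ t (conj z)) := by
      simp only [hv_def, hf_def, hc, hpt t ht]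
      exact Prod.ext rfl (by ring)
    rw [hvv, hf_def]
    exact (h1'.prodMk h2').hasDerivWithinAt
  have hg' : ∀ t ∈ Set.Ico (0:ℝ) N, HasDerivWithinAt g (v t (g t)) (Set.Ici t) t := by
    intro t ht
    have h1' := (hderiv z t (Set.Ico_subset_Icc_self ht)).star
    have h2' := (hderiv' z t (Set.Ico_subset_Icc_self ht)).star
    have hvv : v t (g t) = (star (φ' t z), star ((q t : ℂ) * φ t z - z * φ t z)) := by
      simp only [hv_def, hg_def, hc, hpt t ht]
      refine Prod.ext rfl ?_
      simp only [Complex.star_def, map_sub, map_mul, Complex.conj_ofReal]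
      ring
    rw [hvv, hg_def]
    exact (h1'.prodMk h2').hasDerivWithinAt
  have ha : f 0 = g 0 := by
    simp [hf_def, hg_def, h0, h1]
  have heq := ODE_solution_unique hv hfc hf' hgc hg' ha (Set.right_mem_Icc.mpr hN.le)
  rw [hf_def, hg_def] at heq
  exact ⟨congrArg Prod.fst heq, congrArg Prod.snd heq⟩


lemma int_pos (N : ℝ) (hN : 0 < N) (f g : ℝ → ℂ)
    (hd : ∀ x ∈ Set.Icc (0:ℝ) N, HasDerivAt f (g x) x)
    (h0 : f 0 = 0) (h1 : g 0 = 1) :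
    0 < ∫ x in (0:ℝ)..N, ‖f x‖ ^ 2 := by
  have hfc : ContinuousOn f (Set.Icc 0 N) :=
    fun x hx => (hd x hx).continuousAt.continuousWithinAt
  have hd0 : HasDerivAt f 1 0 := h1 ▸ hd 0 ⟨le_rfl, hN.le⟩
  have hslope := hasDerivAt_iff_tendsto_slope.mp hd0
  -- eventually the slope has norm > 1/2, hence f x ≠ 0 near 0
  have hnz : ∀ᶠ x in nhdsWithin 0 {(0:ℝ)}ᶜ, f x ≠ 0 := by
    have : ∀ᶠ x in nhdsWithin 0 {(0:ℝ)}ᶜ, slope f 0 x ∈ Metric.ball (1:ℂ) (1/2) :=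
      hslope (Metric.ball_mem_nhds _ (by norm_num))
    filter_upwards [this] with x hx hfx
    simp only [slope, vsub_eq_sub, hfx, h0, sub_zero, smul_zero, Metric.mem_ball] at hx
    norm_num [dist_eq_norm] at hx
  rw [eventually_nhdsWithin_iff] at hnz
  obtain ⟨ε, hε, hball⟩ := Metric.eventually_nhds_iff.mp hnz
  set δ : ℝ := min (ε/2) N with hδ
  have hδ0 : 0 < δ := lt_min (by linarith) hN
  have hδN : δ ≤ N := min_le_right _ _
  have hpos : ∀ x ∈ Set.Ioo (0:ℝ) δ, 0 < ‖f x‖ ^ 2 := by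
    intro x hx
    have hxne : f x ≠ 0 := by
      apply hball (y := x) _ (by simp; linarith [hx.1])
      rw [Real.dist_eq, sub_zero, abs_of_pos hx.1]
      calc x < δ := hx.2
        _ ≤ ε/2 := min_le_left _ _
        _ < ε := by linarith
    exact pow_pos (norm_pos_iff.mpr hxne) 2
  have hi1 : IntervalIntegrable (fun x => ‖f x‖ ^ 2) MeasureTheory.volume 0 δ := by
    apply ContinuousOn.intervalIntegrable
    apply ((hfc.mono ?_).norm.pow 2)
    rw [Set.uIcc_of_le hδ0.le]
    exact Set.Icc_subset_Icc le_rfl hδN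
  have hi2 : IntervalIntegrable (fun x => ‖f x‖ ^ 2) MeasureTheory.volume δ N := by
    apply ContinuousOn.intervalIntegrable
    apply ((hfc.mono ?_).norm.pow 2)
    rw [Set.uIcc_of_le hδN]
    exact Set.Icc_subset_Icc hδ0.le le_rfl
  have hsplit := intervalIntegral.integral_add_adjacent_intervals hi1 hi2
  rw [← hsplit]
  have hp1 : 0 < ∫ x in (0:ℝ)..δ, ‖f x‖ ^ 2 :=
    intervalIntegral.intervalIntegral_pos_of_pos_on hi1 hpos hδ0
  have hp2 : 0 ≤ ∫ x in δ..N, ‖f x‖ ^ 2 :=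
    intervalIntegral.integral_nonneg hδN (fun x _ => by positivity)
  linarith


/-- `E(z) = φ(N,z) + i φ'(N,z)` is a Hermite–Biehler function. -/
theorem schrodinger_hermite_biehler
    (N : ℝ) (hN : 0 < N) (q : ℝ → ℝ) (hq : ContinuousOn q (Set.Icc 0 N))
    (φ φ' : ℝ → ℂ → ℂ)
    (hderiv : ∀ z : ℂ, ∀ x ∈ Set.Icc (0:ℝ) N, HasDerivAt (fun y => φ y z) (φ' x z) x)
    (hderiv' : ∀ z : ℂ, ∀ x ∈ Set.Icc (0:ℝ) N,
      HasDerivAt (fun y => φ' y z) ((q x : ℂ) * φ x z - z * φ x z) x)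
    (h0 : ∀ z : ℂ, φ 0 z = 0) (h1 : ∀ z : ℂ, φ' 0 z = 1)
    (E : ℂ → ℂ) (hE : ∀ z : ℂ, E z = φ N z + I * φ' N z) :
    ∀ z : ℂ, z.im ≠ 0 →
      ((‖E z‖ ^ 2 - ‖E (conj z)‖ ^ 2) / (4 * z.im) = ∫ x in (0:ℝ)..N, ‖φ x z‖ ^ 2) ∧
      (0 < z.im → ‖E (conj z)‖ < ‖E z‖) := by
  intro z hz
  have hA := wronskian_int N hN q z (fun x => φ x z) (fun x => φ' x z)
    (hderiv z) (hderiv' z) (h0 z) (h1 z)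
  have hsym := conj_symm N hN q hq φ φ' hderiv hderiv' h0 h1 z
  have hpos := int_pos N hN (fun x => φ x z) (fun x => φ' x z) (hderiv z) (h0 z) (h1 z)
  set u := φ N z with hu
  set v := φ' N z with hv
  set S : ℝ := ∫ x in (0:ℝ)..N, ‖φ x z‖ ^ 2 with hS
  have key : ‖E z‖ ^ 2 - ‖E (conj z)‖ ^ 2 = 4 * z.im * S := by
    have e1 : E z = u + I * v := hE z
    have e2 : E (conj z) = conj (u - I * v) := by
      rw [hE, hsym.1, hsym.2, map_sub, map_mul, Complex.conj_I]
      ring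
    have hnormconj : ‖E (conj z)‖ = ‖u - I * v‖ := by rw [e2, RCLike.norm_conj]
    have hnsq : ∀ w : ℂ, ((‖w‖ ^ 2 : ℝ) : ℂ) = conj w * w := by
      intro w
      rw [Complex.sq_norm]; exact Complex.normSq_eq_conj_mul_self
    apply Complex.ofReal_injective
    push_cast [e1, hnormconj]
    rw [← Complex.ofReal_pow, ← Complex.ofReal_pow, hnsq, hnsq]
    have expand : conj (u + I * v) * (u + I * v) - conj (u - I * v) * (u - I * v)
        = 2 * I * (conj u * v - conj v * u) := by
      simp only [map_add, map_sub, map_mul, Complex.conj_I]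
      ring
    rw [expand, hA]
    have hcz : conj z - z = -(2 * z.im * I) := by
      have := Complex.sub_conj z
      push_cast at this ⊢
      linear_combination -this
    rw [hcz]
    have : (I : ℂ) * I = -1 := Complex.I_mul_I
    linear_combination (-4 * z.im * (S:ℂ)) * this
  refine ⟨?_, ?_⟩
  · rw [key]
    field_simp
  · intro him
    have h2 : ‖E (conj z)‖ ^ 2 < ‖E z‖ ^ 2 := by nlinarith
    exact lt_of_pow_lt_pow_left₀ 2 (norm_nonneg _) h2
end

section
/- Let θ(·,z) solve the Dirac system Jθ' + Vθ = zθ on [0,N] with θ(0,z) = (0,1), V real symmetric trace-free and continuous, and define E(z) := θ₁(N,z) - i·θ₂(N,z). Then for every z with Im z ≠ 0, (|E(z)|² - |E(conj z)|²)/(4·Im z) = ∫₀ᴺ (|θ₁(x,z)|² + |θ₂(x,z)|²) dx > 0. In particular E is a Hermite–Biehler function. -/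
open Complex ComplexConjugate

private lemma norm_sub_I_mul_sq (a b : ℂ) :
    ‖a - I * b‖ ^ 2 = ‖a‖ ^ 2 + ‖b‖ ^ 2 + 2 * ((starRingEnd ℂ) a * b).im := by
  simp only [Complex.sq_norm, Complex.normSq_apply, Complex.sub_re,
    Complex.sub_im, Complex.mul_re, Complex.mul_im, Complex.add_re, Complex.add_im,
    Complex.I_re, Complex.I_im, Complex.conj_re, Complex.conj_im]
  ring
open Complex ComplexConjugate

private lemma dirac_conj_symm
    (N : ℝ) (hN : 0 < N) (p q : ℝ → ℝ)
    (hp : ContinuousOn p (Set.Icc 0 N)) (hq : ContinuousOn q (Set.Icc 0 N))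
    (θ1 θ2 : ℝ → ℂ → ℂ)
    (hθ1 : ∀ z : ℂ, ∀ x ∈ Set.Icc (0:ℝ) N,
      HasDerivAt (fun y => θ1 y z) ((q x : ℂ) * θ1 x z - (p x : ℂ) * θ2 x z - z * θ2 x z) x)
    (hθ2 : ∀ z : ℂ, ∀ x ∈ Set.Icc (0:ℝ) N,
      HasDerivAt (fun y => θ2 y z) (z * θ1 x z - (p x : ℂ) * θ1 x z - (q x : ℂ) * θ2 x z) x)
    (h0 : ∀ z : ℂ, θ1 0 z = 0 ∧ θ2 0 z = 1) (z : ℂ) :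
    ∀ x ∈ Set.Icc (0:ℝ) N,
      θ1 x (conj z) = conj (θ1 x z) ∧ θ2 x (conj z) = conj (θ2 x z) := by
  set w : ℂ := conj z with hw
  -- clamped coefficients
  set pr : ℝ → ℝ := fun t => max 0 (min t N) with hpr
  have hprmem : ∀ t, pr t ∈ Set.Icc (0:ℝ) N := fun t =>
    ⟨le_max_left _ _, max_le (le_of_lt hN) (min_le_right _ _)⟩
  have hpreq : ∀ t ∈ Set.Icc (0:ℝ) N, pr t = t := fun t ht => by
    simp only [hpr]; rw [min_eq_left ht.2, max_eq_right ht.1]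
  obtain ⟨Cp, hCp⟩ := IsCompact.exists_bound_of_continuousOn isCompact_Icc hp
  obtain ⟨Cq, hCq⟩ := IsCompact.exists_bound_of_continuousOn isCompact_Icc hq
  have hCp0 : 0 ≤ Cp := le_trans (norm_nonneg _) (hCp 0 ⟨le_refl _, hN.le⟩)
  have hCq0 : 0 ≤ Cq := le_trans (norm_nonneg _) (hCq 0 ⟨le_refl _, hN.le⟩)
  set Kr : ℝ := Cp + Cq + ‖w‖ with hKr
  have hKr0 : 0 ≤ Kr := by positivity
  set K : NNReal := Kr.toNNReal with hK
  set V : ℝ → ℂ × ℂ → ℂ × ℂ := fun t e =>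
    ((q (pr t) : ℂ) * e.1 - ((p (pr t) : ℂ) + w) * e.2,
     (w - (p (pr t) : ℂ)) * e.1 - (q (pr t) : ℂ) * e.2) with hV
  have hlip : ∀ t, LipschitzWith K (V t) := by
    intro t
    apply LipschitzWith.of_dist_le_mul
    intro e e'
    have hc : (K : ℝ) = Kr := Real.coe_toNNReal _ hKr0
    rw [hc, Prod.dist_eq]
    have h1 : ‖e.1 - e'.1‖ ≤ dist e e' := by
      rw [← dist_eq_norm, Prod.dist_eq]; exact le_max_left _ _
    have h2 : ‖e.2 - e'.2‖ ≤ dist e e' := by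
      rw [← dist_eq_norm, Prod.dist_eq]; exact le_max_right _ _
    have hpw : ‖(p (pr t) : ℂ) + w‖ ≤ Cp + ‖w‖ := by
      refine le_trans (norm_add_le _ _) ?_
      exact add_le_add_left (show ‖(p (pr t) : ℂ)‖ ≤ Cp by rw [Complex.norm_real]; exact hCp _ (hprmem t)) _
    have hwp : ‖w - (p (pr t) : ℂ)‖ ≤ ‖w‖ + Cp := by
      refine le_trans (norm_sub_le _ _) ?_
      exact add_le_add_right (show ‖(p (pr t) : ℂ)‖ ≤ Cp by rw [Complex.norm_real]; exact hCp _ (hprmem t)) _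
    have hqb : ‖(q (pr t) : ℂ)‖ ≤ Cq := by
      rw [Complex.norm_real]; exact hCq _ (hprmem t)
    have hpb : ‖(p (pr t) : ℂ)‖ ≤ Cp := by
      rw [Complex.norm_real]; exact hCp _ (hprmem t)
    have hd0 : (0:ℝ) ≤ dist e e' := dist_nonneg
    apply max_le
    · have : (V t e).1 - (V t e').1 =
          (q (pr t) : ℂ) * (e.1 - e'.1) - ((p (pr t) : ℂ) + w) * (e.2 - e'.2) := by
        simp only [hV]; ring
      rw [dist_eq_norm, this]
      calc ‖(q (pr t) : ℂ) * (e.1 - e'.1) - ((p (pr t) : ℂ) + w) * (e.2 - e'.2)‖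
          ≤ ‖(q (pr t) : ℂ) * (e.1 - e'.1)‖ + ‖((p (pr t) : ℂ) + w) * (e.2 - e'.2)‖ :=
            norm_sub_le _ _
        _ = ‖(q (pr t) : ℂ)‖ * ‖e.1 - e'.1‖ + ‖(p (pr t) : ℂ) + w‖ * ‖e.2 - e'.2‖ := by
            rw [norm_mul, norm_mul]
        _ ≤ Cq * dist e e' + (Cp + ‖w‖) * dist e e' :=
            add_le_add (mul_le_mul hqb h1 (norm_nonneg _) hCq0)
              (mul_le_mul hpw h2 (norm_nonneg _) (by positivity))
        _ = Kr * dist e e' := by rw [hKr]; ring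
    · have : (V t e).2 - (V t e').2 =
          (w - (p (pr t) : ℂ)) * (e.1 - e'.1) - (q (pr t) : ℂ) * (e.2 - e'.2) := by
        simp only [hV]; ring
      rw [dist_eq_norm, this]
      calc ‖(w - (p (pr t) : ℂ)) * (e.1 - e'.1) - (q (pr t) : ℂ) * (e.2 - e'.2)‖
          ≤ ‖(w - (p (pr t) : ℂ))‖ * ‖e.1 - e'.1‖ + ‖(q (pr t) : ℂ)‖ * ‖e.2 - e'.2‖ := by
            refine le_trans (norm_sub_le _ _) ?_
            rw [norm_mul, norm_mul]
        _ ≤ (‖w‖ + Cp) * dist e e' + Cq * dist e e' :=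
            add_le_add (mul_le_mul hwp h1 (norm_nonneg _) (by positivity))
              (mul_le_mul hqb h2 (norm_nonneg _) hCq0)
        _ = Kr * dist e e' := by rw [hKr]; ring
  -- the two solutions
  set f : ℝ → ℂ × ℂ := fun x => (θ1 x w, θ2 x w) with hf
  set g : ℝ → ℂ × ℂ := fun x => (conj (θ1 x z), conj (θ2 x z)) with hg
  have heq : Set.EqOn f g (Set.Icc 0 N) := by
    apply ODE_solution_unique_of_mem_Icc_right
      (v := V) (s := fun _ => Set.univ) (K := K) (fun t _ => (hlip t).lipschitzOnWith)
    · intro x hx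
      exact (((hθ1 w x hx).prodMk (hθ2 w x hx)).continuousAt).continuousWithinAt
    · intro t ht
      have ht' : t ∈ Set.Icc (0:ℝ) N := Set.Ico_subset_Icc_self ht
      have h1 := hθ1 w t ht'
      have h2 := hθ2 w t ht'
      have hVE : V t (f t) =
          ((q t : ℂ) * θ1 t w - (p t : ℂ) * θ2 t w - w * θ2 t w,
           w * θ1 t w - (p t : ℂ) * θ1 t w - (q t : ℂ) * θ2 t w) := by
        simp only [hV, hf, hpreq t ht', Prod.mk.injEq]
        exact ⟨by ring, by ring⟩
      rw [hVE]
      exact ((h1.prodMk h2)).hasDerivWithinAt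
    · intro t _; trivial
    · intro x hx
      refine ContinuousAt.continuousWithinAt ?_
      exact (((hθ1 z x hx).continuousAt.star).prodMk ((hθ2 z x hx).continuousAt.star))
    · intro t ht
      have ht' : t ∈ Set.Icc (0:ℝ) N := Set.Ico_subset_Icc_self ht
      have h1 := (hθ1 z t ht').star
      have h2 := (hθ2 z t ht').star
      have hVE : V t (g t) =
          (star ((q t : ℂ) * θ1 t z - (p t : ℂ) * θ2 t z - z * θ2 t z),
           star (z * θ1 t z - (p t : ℂ) * θ1 t z - (q t : ℂ) * θ2 t z)) := by
        simp only [hV, hg, hpreq t ht', star_sub, star_mul', Complex.star_def,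
          Complex.conj_ofReal, hw, Prod.mk.injEq]
        exact ⟨by ring, by ring⟩
      rw [hVE]
      exact (h1.prodMk h2).hasDerivWithinAt
    · intro t _; trivial
    · simp only [hf, hg, (h0 w).1, (h0 w).2, (h0 z).1, (h0 z).2, map_zero, map_one]
  intro x hx
  have := heq hx
  simp only [hf, hg, Prod.mk.injEq] at this
  exact this

/-- `E(z) = θ₁(N,z) - i θ₂(N,z)` is a Hermite–Biehler function for the Dirac system. -/
theorem dirac_hermite_biehler
    (N : ℝ) (hN : 0 < N) (p q : ℝ → ℝ)
    (hp : ContinuousOn p (Set.Icc 0 N)) (hq : ContinuousOn q (Set.Icc 0 N))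
    (θ1 θ2 : ℝ → ℂ → ℂ)
    (hθ1 : ∀ z : ℂ, ∀ x ∈ Set.Icc (0:ℝ) N,
      HasDerivAt (fun y => θ1 y z) ((q x : ℂ) * θ1 x z - (p x : ℂ) * θ2 x z - z * θ2 x z) x)
    (hθ2 : ∀ z : ℂ, ∀ x ∈ Set.Icc (0:ℝ) N,
      HasDerivAt (fun y => θ2 y z) (z * θ1 x z - (p x : ℂ) * θ1 x z - (q x : ℂ) * θ2 x z) x)
    (h0 : ∀ z : ℂ, θ1 0 z = 0 ∧ θ2 0 z = 1)
    (E : ℂ → ℂ) (hE : ∀ z : ℂ, E z = θ1 N z - I * θ2 N z) :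
    ∀ z : ℂ, z.im ≠ 0 →
      ((‖E z‖ ^ 2 - ‖E (conj z)‖ ^ 2) / (4 * z.im) =
          ∫ x in (0:ℝ)..N, (‖θ1 x z‖ ^ 2 + ‖θ2 x z‖ ^ 2)) ∧
      (0 < ∫ x in (0:ℝ)..N, (‖θ1 x z‖ ^ 2 + ‖θ2 x z‖ ^ 2)) ∧
      (0 < z.im → ‖E (conj z)‖ < ‖E z‖) := by
  intro z hz
  have hNmem : N ∈ Set.Icc (0:ℝ) N := ⟨hN.le, le_refl N⟩
  have h0mem : (0:ℝ) ∈ Set.Icc (0:ℝ) N := ⟨le_refl _, hN.le⟩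
  set f : ℝ → ℝ := fun x => ‖θ1 x z‖ ^ 2 + ‖θ2 x z‖ ^ 2 with hfdef
  set m : ℝ → ℝ := fun x => ((starRingEnd ℂ) (θ1 x z) * θ2 x z).im with hmdef
  -- derivative of m
  have hm : ∀ x ∈ Set.Icc (0:ℝ) N, HasDerivAt m (z.im * f x) x := by
    intro x hx
    have h1 := (hθ1 z x hx).star
    have h2 := hθ2 z x hx
    have h3 := h1.mul h2
    have h4 := (Complex.imCLM.hasFDerivAt).comp_hasDerivAt x h3
    have heq : Complex.imCLM
        (star ((q x : ℂ) * θ1 x z - (p x : ℂ) * θ2 x z - z * θ2 x z) * θ2 x z +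
          star (θ1 x z) * (z * θ1 x z - (p x : ℂ) * θ1 x z - (q x : ℂ) * θ2 x z)) =
        z.im * f x := by
      simp only [hfdef, Complex.imCLM_apply, Complex.sq_norm,
        Complex.normSq_apply, ← starRingEnd_apply, map_sub, map_mul, Complex.conj_ofReal,
        Complex.add_im, Complex.sub_im, Complex.mul_im, Complex.mul_re, Complex.sub_re,
        Complex.conj_re, Complex.conj_im, Complex.ofReal_re, Complex.ofReal_im]
      ring
    rw [heq] at h4
    exact h4
  -- continuity / integrability
  have hcf : ContinuousOn f (Set.Icc 0 N) := by
    intro x hx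
    exact (((hθ1 z x hx).continuousAt.norm.pow 2).add
      ((hθ2 z x hx).continuousAt.norm.pow 2)).continuousWithinAt
  have hIf : IntervalIntegrable f MeasureTheory.volume 0 N :=
    (hcf.mono (by rw [Set.uIcc_of_le hN.le])).intervalIntegrable
  have hIzf : IntervalIntegrable (fun x => z.im * f x) MeasureTheory.volume 0 N :=
    hIf.const_mul _
  -- FTC
  have hFTC : ∫ x in (0:ℝ)..N, z.im * f x = m N - m 0 :=
    intervalIntegral.integral_eq_sub_of_hasDerivAt
      (fun x hx => hm x (by rwa [Set.uIcc_of_le hN.le] at hx)) hIzf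
  have hm0 : m 0 = 0 := by simp [hmdef, (h0 z).1]
  have hkey : z.im * ∫ x in (0:ℝ)..N, f x = m N := by
    rw [← intervalIntegral.integral_const_mul, hFTC, hm0, sub_zero]
  -- norms of E
  have hconj := dirac_conj_symm N hN p q hp hq θ1 θ2 hθ1 hθ2 h0 z N hNmem
  have hEz : ‖E z‖ ^ 2 = ‖θ1 N z‖ ^ 2 + ‖θ2 N z‖ ^ 2 + 2 * m N := by
    rw [hE z]; exact norm_sub_I_mul_sq _ _
  have hEw : ‖E (conj z)‖ ^ 2 = ‖θ1 N z‖ ^ 2 + ‖θ2 N z‖ ^ 2 - 2 * m N := by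
    rw [hE (conj z), hconj.1, hconj.2, norm_sub_I_mul_sq]
    have him : ((starRingEnd ℂ) ((starRingEnd ℂ) (θ1 N z)) * (starRingEnd ℂ) (θ2 N z)).im
        = - m N := by
      rw [Complex.conj_conj]
      have h' : θ1 N z * (starRingEnd ℂ) (θ2 N z) =
          (starRingEnd ℂ) ((starRingEnd ℂ) (θ1 N z) * θ2 N z) := by
        rw [map_mul, Complex.conj_conj]
      rw [h', Complex.conj_im]
    rw [him]
    simp only [RCLike.norm_conj]
    ring
  have hdiff : ‖E z‖ ^ 2 - ‖E (conj z)‖ ^ 2 = 4 * (z.im * ∫ x in (0:ℝ)..N, f x) := by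
    rw [hkey, hEz, hEw]; ring
  -- positivity of the integral
  have hpos : 0 < ∫ x in (0:ℝ)..N, f x := by
    have hnn : 0 ≤ᵐ[MeasureTheory.volume] f :=
      Filter.Eventually.of_forall fun x => by positivity
    rw [intervalIntegral.integral_pos_iff_support_of_nonneg_ae hnn hIf]
    refine ⟨hN, ?_⟩
    have hc0 : ContinuousAt f 0 :=
      ((hθ1 z 0 h0mem).continuousAt.norm.pow 2).add
        ((hθ2 z 0 h0mem).continuousAt.norm.pow 2)
    have hf0 : f 0 = 1 := by simp [hfdef, (h0 z).1, (h0 z).2]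
    have hmem : {y : ℝ | 0 < y} ∈ nhds (f 0) := by
      rw [hf0]; exact isOpen_Ioi.mem_nhds (by norm_num)
    obtain ⟨ε, hε, hball⟩ := Metric.mem_nhds_iff.1 (hc0 hmem)
    set c : ℝ := min (ε / 2) N with hc
    have hc0' : 0 < c := lt_min (by positivity) hN
    have hsub : Set.Ioc 0 c ⊆ Function.support f ∩ Set.Ioc 0 N := by
      intro x hx
      constructor
      · have : x ∈ Metric.ball (0:ℝ) ε := by
          rw [Metric.mem_ball, Real.dist_eq, sub_zero, abs_of_pos hx.1]
          exact lt_of_le_of_lt (le_trans hx.2 (min_le_left _ _)) (by linarith)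
        exact ne_of_gt (hball this)
      · exact ⟨hx.1, le_trans hx.2 (min_le_right _ _)⟩
    calc (0:ENNReal) < MeasureTheory.volume (Set.Ioc 0 c) := by
          rw [Real.volume_Ioc]; simpa using hc0'
      _ ≤ _ := MeasureTheory.measure_mono hsub
  refine ⟨?_, hpos, ?_⟩
  · rw [hdiff]
    field_simp
  · intro him
    have h2 : ‖E (conj z)‖ ^ 2 < ‖E z‖ ^ 2 := by
      nlinarith [hdiff, mul_pos him hpos]
    exact lt_of_pow_lt_pow_left₀ 2 (norm_nonneg _) h2
end

section
/- Let φ_n(z) be as in the discrete Schrödinger recursion with real coefficients and define E(z) := φ_N(z) - i·φ_{N+1}(z) for a fixed N ≥ 1. Then for all z with Im z ≠ 0, (|E(z)|² - |E(conj z)|²)/(4·Im z) = Σ_{i=1}^{N} |φ_i(z)|² > 0; consequently |E(z)| > |E(conj z)| for Im z > 0, i.e., E is a Hermite–Biehler function. -/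
open Complex ComplexConjugate

/-- `E(z) = φ_N(z) - i φ_{N+1}(z)` is a Hermite–Biehler function. -/
theorem discrete_schrodinger_hermite_biehler
    (b : ℕ → ℝ) (φ : ℕ → ℂ → ℂ)
    (h0 : ∀ z : ℂ, φ 0 z = 0) (h1 : ∀ z : ℂ, φ 1 z = 1)
    (hrec : ∀ i : ℕ, 1 ≤ i → ∀ z : ℂ,
      φ (i + 1) z = (z - (b i : ℂ)) * φ i z - φ (i - 1) z)
    (N : ℕ) (hN : 1 ≤ N)
    (E : ℂ → ℂ) (hE : ∀ z : ℂ, E z = φ N z - I * φ (N + 1) z) :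
    ∀ z : ℂ, z.im ≠ 0 →
      ((‖E z‖ ^ 2 - ‖E (conj z)‖ ^ 2) / (4 * z.im) =
          ∑ i ∈ Finset.Icc 1 N, ‖φ i z‖ ^ 2) ∧
      (0 < ∑ i ∈ Finset.Icc 1 N, ‖φ i z‖ ^ 2) ∧
      (0 < z.im → ‖E (conj z)‖ < ‖E z‖) := by
  have hconj : ∀ n : ℕ, ∀ z : ℂ, φ n (conj z) = conj (φ n z) := by
    intro n
    induction n using Nat.twoStepInduction with
    | zero => intro z; simp [h0]
    | one => intro z; simp [h1]
    | more n ih ih1 =>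
      intro z
      have h2 := hrec (n+1) (by omega) (conj z)
      have h3 := hrec (n+1) (by omega) z
      simp only [Nat.add_sub_cancel] at h2 h3
      rw [h2, h3, ih1, ih]
      simp [map_mul, map_sub, Complex.conj_conj, Complex.conj_ofReal]
  intro z hz
  have key : ∀ n : ℕ, 1 ≤ n →
      φ (n+1) z * conj (φ n z) - conj (φ (n+1) z) * φ n z
        = (z - conj z) * ∑ i ∈ Finset.Icc 1 n, φ i z * conj (φ i z) := by
    intro n hn
    induction n with
    | zero => omega
    | succ m ih =>
      rcases Nat.lt_or_ge 1 (m+1) with h | h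
      · have hm : 1 ≤ m := by omega
        have ih' := ih hm
        have h3 := hrec (m+1) (by omega) z
        simp only [Nat.add_sub_cancel] at h3
        rw [Finset.sum_Icc_succ_top (by omega : 1 ≤ m+1), h3]
        simp only [map_sub, map_mul, Complex.conj_ofReal]
        linear_combination ih'
      · have hm0 : m = 0 := by omega
        subst hm0
        have h3 := hrec 1 le_rfl z
        simp only [Nat.sub_self] at h3
        rw [h3, h0, h1]
        simp only [map_sub, map_mul, Complex.conj_ofReal, map_one, map_zero]
        rw [show Finset.Icc 1 1 = {1} from rfl, Finset.sum_singleton, h1]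
        simp
  have hmc : ∀ w : ℂ, w * conj w = ((‖w‖ ^ 2 : ℝ) : ℂ) := by
    intro w
    rw [Complex.mul_conj]
    norm_cast
    rw [Complex.normSq_eq_norm_sq]
  have hmc' : ∀ w : ℂ, w * conj w = ((‖w‖ : ℂ)) ^ 2 := by
    intro w; rw [hmc]; push_cast; ring
  have main : ((‖E z‖ ^ 2 - ‖E (conj z)‖ ^ 2 : ℝ) : ℂ)
      = ((4 * z.im * ∑ i ∈ Finset.Icc 1 N, ‖φ i z‖ ^ 2 : ℝ) : ℂ) := by
    have hsum : (∑ i ∈ Finset.Icc 1 N, ((‖φ i z‖ : ℂ)) ^ 2)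
        = ∑ i ∈ Finset.Icc 1 N, φ i z * conj (φ i z) :=
      Finset.sum_congr rfl fun i _ => (hmc' (φ i z)).symm
    push_cast
    rw [← hmc' (E z), ← hmc' (E (conj z))]
    rw [hE z, hE (conj z), hconj N, hconj (N+1)]
    have hk := key N hN
    have hsc : z - conj z = (2 * z.im : ℝ) * I := Complex.sub_conj z
    rw [hsc] at hk
    simp only [map_sub, map_mul, Complex.conj_conj, Complex.conj_I,
      Complex.conj_ofReal]
    push_cast at hk ⊢
    linear_combination (-2 * I) * hk + (-4 * (z.im:ℂ)) * hsum +
      (-4 * (z.im:ℂ) * (∑ i ∈ Finset.Icc 1 N, φ i z * conj (φ i z))) * Complex.I_sq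
  have main' : ‖E z‖ ^ 2 - ‖E (conj z)‖ ^ 2
      = 4 * z.im * ∑ i ∈ Finset.Icc 1 N, ‖φ i z‖ ^ 2 := by
    exact_mod_cast main
  have hpos : 0 < ∑ i ∈ Finset.Icc 1 N, ‖φ i z‖ ^ 2 := by
    have h1mem : (1 : ℕ) ∈ Finset.Icc 1 N := by simp [hN]
    have hle : ‖φ 1 z‖ ^ 2 ≤ ∑ i ∈ Finset.Icc 1 N, ‖φ i z‖ ^ 2 :=
      Finset.single_le_sum (f := fun i => ‖φ i z‖ ^ 2)
        (fun i _ => by positivity) h1mem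
    have : ‖φ 1 z‖ ^ 2 = 1 := by rw [h1]; simp
    linarith
  refine ⟨?_, hpos, ?_⟩
  · rw [main']
    field_simp
  · intro him
    have h4 : 0 < 4 * z.im * ∑ i ∈ Finset.Icc 1 N, ‖φ i z‖ ^ 2 := by positivity
    nlinarith [norm_nonneg (E z), norm_nonneg (E (conj z))]
end

section
/- Let r = (r₀, r₁, …, r_{2T-2}) with r₀ = 1 be the response vector and define the T×T matrix C^T by C^T_{ij} = Σ_{k=0}^{T - max(i,j)} r_{|i-j| + 2k} (indices 1 ≤ i,j ≤ T). If r_{k-1} = ∫ T_k(λ) dρ(λ) for a positive finite measure ρ for which all T_k are integrable, then C^T_{l+1, m+1} = ∫ T_{T-l}(λ) T_{T-m}(λ) dρ(λ) for 0 ≤ l, m ≤ T-1. -/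
open MeasureTheory

lemma cheb_key (T : ℕ → ℝ → ℝ) (hT0 : ∀ x, T 0 x = 0) (hT1 : ∀ x, T 1 x = 1)
    (hrec : ∀ (t : ℕ) (x : ℝ), T (t + 2) x = x * T (t + 1) x - T t x) :
    ∀ (a d : ℕ) (x : ℝ),
      T (a + 1) x * T (a + 1 + d) x = T a x * T (a + 2 + d) x + T (d + 1) x := by
  intro a
  induction a with
  | zero => intro d x; simp [hT0, hT1, Nat.add_comm]
  | succ n ih =>
    intro d x
    have h1 := hrec n x
    have h2 := hrec (n + 1 + d) x
    rw [show n + 1 + d + 2 = n + 3 + d by omega,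
        show n + 1 + d + 1 = n + 2 + d by omega] at h2
    have h3 := ih d x
    rw [show n + 1 + 1 = n + 2 by omega, show n + 1 + 1 + d = n + 2 + d by omega,
        show n + 1 + 2 + d = n + 3 + d by omega, h1, h2]
    nlinarith [h3]

lemma cheb_prod (T : ℕ → ℝ → ℝ) (hT0 : ∀ x, T 0 x = 0) (hT1 : ∀ x, T 1 x = 1)
    (hrec : ∀ (t : ℕ) (x : ℝ), T (t + 2) x = x * T (t + 1) x - T t x) :
    ∀ (a d : ℕ) (x : ℝ),
      T a x * T (a + d) x = ∑ k ∈ Finset.range a, T (d + 2 * k + 1) x := by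
  intro a
  induction a with
  | zero => intro d x; simp [hT0]
  | succ n ih =>
    intro d x
    rw [Finset.sum_range_succ']
    have h1 := cheb_key T hT0 hT1 hrec n d x
    have h2 := ih (d + 2) x
    rw [show n + (d + 2) = n + 2 + d by omega] at h2
    rw [show n + 1 + d = n + 1 + d by rfl, h1, h2]
    have : ∀ k, d + 2 + 2 * k + 1 = d + 2 * (k + 1) + 1 := by intro k; omega
    simp only [this]

/-- Spectral representation of the connecting operator of the discrete Schrödinger operator. -/
theorem connecting_operator_spectral_representation
    (Tm : ℕ) (hTm : 1 ≤ Tm) (r : ℕ → ℝ) (hr0 : r 0 = 1)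
    (T : ℕ → ℝ → ℝ) (hT0 : ∀ x, T 0 x = 0) (hT1 : ∀ x, T 1 x = 1)
    (hrec : ∀ (t : ℕ) (x : ℝ), T (t + 2) x = x * T (t + 1) x - T t x)
    (ρ : Measure ℝ) [IsFiniteMeasure ρ]
    (hint : ∀ k : ℕ, Integrable (T k) ρ)
    (hrint : ∀ k : ℕ, 1 ≤ k → r (k - 1) = ∫ x, T k x ∂ρ) :
    ∀ l m : ℕ, l < Tm → m < Tm →
      (∑ k ∈ Finset.range (Tm - max (l + 1) (m + 1) + 1),
          r (((l : ℤ) - (m : ℤ)).natAbs + 2 * k)) =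
        ∫ x, T (Tm - l) x * T (Tm - m) x ∂ρ := by
  intro l m hl hm
  -- notation
  set a := min (Tm - l) (Tm - m) with ha
  set d := ((l : ℤ) - (m : ℤ)).natAbs with hd
  have hcnt : Tm - max (l + 1) (m + 1) + 1 = a := by
    simp only [ha]
    omega
  have hdmax : max (Tm - l) (Tm - m) = a + d := by
    simp only [ha, hd]
    omega
  have hprod : ∀ x, T (Tm - l) x * T (Tm - m) x
      = ∑ k ∈ Finset.range a, T (d + 2 * k + 1) x := by
    intro x
    rcases le_total (Tm - l) (Tm - m) with h | h
    · have h1 : Tm - l = a := by simp only [ha]; omega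
      have h2 : Tm - m = a + d := by rw [← hdmax]; omega
      rw [h1, h2, cheb_prod T hT0 hT1 hrec]
    · have h1 : Tm - m = a := by simp only [ha]; omega
      have h2 : Tm - l = a + d := by rw [← hdmax]; omega
      rw [h1, h2, mul_comm, cheb_prod T hT0 hT1 hrec]
  rw [hcnt]
  have : ∫ x, T (Tm - l) x * T (Tm - m) x ∂ρ
      = ∑ k ∈ Finset.range a, ∫ x, T (d + 2 * k + 1) x ∂ρ := by
    rw [← integral_finset_sum _ (fun k _ => hint (d + 2 * k + 1))]
    exact integral_congr_ae (Filter.Eventually.of_forall hprod)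
  rw [this]
  refine Finset.sum_congr rfl fun k _ => ?_
  have := hrint (d + 2 * k + 1) (by omega)
  rwa [show d + 2 * k + 1 - 1 = d + 2 * k by omega] at this
end
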